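/- arXiv:1909.09512 — 8 statements merged into one kernel-verified Lean document; each statement's English description precedes it below -/
import Mathlib

section
/- Let G be a finite group whose 2-Sylow subgroup is cyclic, and write |G| = m·2^k with m odd. Then G has a unique normal subgroup of order m. -/
theorem stmt_0 (G : Type*) [Group G] [Fintype G] (m k : ℕ) (hm : Odd m)
    (hcard : Nat.card G = m * 2 ^ k)
    (hcyc : ∀ S : Sylow 2 G, IsCyclic S) :
    ∃! N : Subgroup G, N.Normal ∧ Nat.card N = m := by
  have hp : Fact (Nat.Prime 2) := ⟨Nat.prime_two⟩
  have hm0 : m ≠ 0 := by rintro rfl; exact ((Nat.not_odd_iff_even.mpr Even.zero)) hm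
  obtain ⟨P⟩ : Nonempty (Sylow 2 G) := inferInstance
  -- card of P
  have hPcard : Nat.card (P : Subgroup G) = 2 ^ k := by
    rw [Sylow.card_eq_multiplicity, hcard]
    congr 1
    rw [Nat.factorization_mul hm0 (by positivity), Nat.factorization_pow]
    have h0 : m.factorization 2 = 0 :=
      Nat.factorization_eq_zero_of_not_dvd (by
        intro h; exact ((Nat.not_odd_iff_even.mpr (even_iff_two_dvd.mpr h))) hm)
    simp [h0, Nat.Prime.factorization Nat.prime_two]
  -- P is commutative
  haveI : IsCyclic (P : Subgroup G) := hcyc P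
  haveI hPcomm : IsMulCommutative (P : Subgroup G) := by
    letI := IsCyclic.commGroup (α := (P : Subgroup G))
    exact ⟨⟨mul_comm⟩⟩
  -- normalizer ≤ centralizer
  have hP : (Subgroup.normalizer ((P : Subgroup G) : Set G)) ≤ Subgroup.centralizer ((P : Subgroup G) : Set G) := by
    rw [← Subgroup.subgroupOf_eq_top, ← Subgroup.normalizerMonoidHom_ker,
      ← Subgroup.index_eq_one]
    have h1 : (Subgroup.normalizerMonoidHom (P : Subgroup G)).ker.index ∣ 2 ^ k := by
      rw [Subgroup.index_ker]
      refine (Subgroup.card_subgroup_dvd_card _).trans ?_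
      rw [IsCyclic.card_mulAut, hPcard]
      rcases Nat.eq_zero_or_pos k with rfl | hk
      · simp
      · calc Nat.totient (2 ^ k) = 2 ^ (k - 1) * (2 - 1) :=
              Nat.totient_prime_pow Nat.prime_two hk
          _ ∣ 2 ^ k := by simpa using pow_dvd_pow 2 (Nat.sub_le k 1)
    have h4 : ¬ 2 ∣ (Subgroup.normalizerMonoidHom (P : Subgroup G)).ker.index := by
      intro h
      have hle : (P : Subgroup G).subgroupOf (Subgroup.normalizer ((P : Subgroup G) : Set G)) ≤
          (Subgroup.normalizerMonoidHom (P : Subgroup G)).ker := by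
        rw [Subgroup.normalizerMonoidHom_ker]
        exact Subgroup.comap_mono (Subgroup.le_centralizer (P : Subgroup G))
      have hdvd : (Subgroup.normalizerMonoidHom (P : Subgroup G)).ker.index ∣
          ((P : Subgroup G).subgroupOf (Subgroup.normalizer ((P : Subgroup G) : Set G))).index :=
        Subgroup.index_dvd_of_le hle
      set Q : Sylow 2 (Subgroup.normalizer ((P : Subgroup G) : Set G)) := P.subtype Subgroup.le_normalizer with hQ
      have hrel : (Q : Subgroup (Subgroup.normalizer ((P : Subgroup G) : Set G))).relIndex
          (Subgroup.normalizer ((Q : Subgroup (Subgroup.normalizer ((P : Subgroup G) : Set G))) : Set (Subgroup.normalizer ((P : Subgroup G) : Set G)))) ≠ 0 := by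
        show ((Q : Subgroup (Subgroup.normalizer ((P : Subgroup G) : Set G))).subgroupOf
          (Subgroup.normalizer ((Q : Subgroup (Subgroup.normalizer ((P : Subgroup G) : Set G))) : Set (Subgroup.normalizer ((P : Subgroup G) : Set G))))).index ≠ 0
        exact Subgroup.index_ne_zero_of_finite
      have hsyl : ¬ 2 ∣ (Q : Subgroup (Subgroup.normalizer ((P : Subgroup G) : Set G))).index :=
        Q.not_dvd_index' hrel
      rw [hQ, Sylow.coe_subtype] at hsyl
      exact hsyl (h.trans hdvd)
    obtain ⟨j, hj⟩ := (Nat.dvd_prime_pow Nat.prime_two).mp h1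
    cases j with
    | zero => simpa using hj.2
    | succ n => exact absurd (hj.2 ▸ dvd_pow_self 2 (Nat.succ_ne_zero n)) h4
  -- Burnside's normal p-complement theorem
  haveI : (P : Subgroup G).FiniteIndex := inferInstance
  set K := (MonoidHom.transferSylow P hP).ker with hK
  have hcompl := MonoidHom.ker_transferSylow_isComplement' P hP
  have hKcard : Nat.card K = m := by
    have := hcompl.card_mul
    rw [hPcard, hcard] at this
    exact Nat.eq_of_mul_eq_mul_right (by positivity) this
  have hKindex : K.index = 2 ^ k := by
    rw [hcompl.symm.index_eq_card, hPcard]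
  -- any subgroup of card m is ≤ K
  have key : ∀ N : Subgroup G, Nat.card N = m → N ≤ K := by
    intro N hN x hx
    have h1 : orderOf x ∣ m := by
      have := orderOf_dvd_natCard (⟨x, hx⟩ : N)
      rwa [hN, Subgroup.orderOf_mk] at this
    rw [← QuotientGroup.eq_one_iff (N := K) x, ← orderOf_eq_one_iff]
    have h2 : orderOf ((x : G ⧸ K)) ∣ m :=
      dvd_trans (orderOf_map_dvd (QuotientGroup.mk' K) x) h1
    have h3 : orderOf ((x : G ⧸ K)) ∣ 2 ^ k := by
      have := orderOf_dvd_natCard ((x : G ⧸ K))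
      rwa [← Subgroup.index_eq_card, hKindex] at this
    have hcop : Nat.Coprime m (2 ^ k) := (Nat.coprime_two_right.mpr hm).pow_right k
    have h5 : orderOf ((x : G ⧸ K)) ∣ Nat.gcd m (2 ^ k) := Nat.dvd_gcd h2 h3
    rwa [Nat.Coprime.gcd_eq_one hcop, Nat.dvd_one] at h5
  refine ⟨K, ⟨MonoidHom.normal_ker _, hKcard⟩, ?_⟩
  rintro N ⟨-, hN⟩
  haveI : Finite K := inferInstance
  exact Subgroup.eq_of_le_of_card_ge (key N hN) (by rw [hN, hKcard])
end

section
/- Let G be a finite group with cyclic 2-Sylow subgroup S generating a surjection onto Z/2 via the sign of the left-regular representation: the composite map G → Sym(G) → Z/2, given by left multiplication followed by the sign homomorphism, is surjective whenever |G| is even and the 2-Sylow subgroup of G is cyclic and nontrivial. -/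
open Equiv Equiv.Perm

lemma card_support_cycleOf_mulLeft {G : Type*} [Group G] [Fintype G] [DecidableEq G]
    (x : G) (hx : x ≠ 1) (a : G) :
    ((Equiv.mulLeft x).cycleOf a).support.card = orderOf x := by
  have hfa : ∀ b : G, Equiv.mulLeft x b ≠ b := by
    intro b h
    simp only [Equiv.coe_mulLeft] at h
    exact hx (mul_right_cancel (b := b) (by simpa using h))
  have hcyc : ((Equiv.mulLeft x).cycleOf a).IsCycle :=
    (Equiv.mulLeft x).isCycle_cycleOf (hfa a)
  set c := (Equiv.mulLeft x).cycleOf a with hc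
  have hpow : ∀ n : ℕ, c ^ n = 1 ↔ x ^ n = 1 := by
    intro n
    constructor
    · intro h
      have h2 := congrArg (fun p : Equiv.Perm G => p a) h
      simp only [hc, Equiv.Perm.cycleOf_pow_apply_self, Equiv.Perm.one_apply,
        Equiv.pow_mulLeft, Equiv.coe_mulLeft] at h2
      exact mul_right_cancel (b := a) (by simpa using h2)
    · intro h
      have hna : (c ^ n) a = a := by
        rw [hc, Equiv.Perm.cycleOf_pow_apply_self, Equiv.pow_mulLeft, h]
        simp
      ext b
      simp only [Equiv.Perm.one_apply]
      by_cases hb : b ∈ c.support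
      · have ha' : a ∈ c.support := by
          rw [hc, Equiv.Perm.mem_support_cycleOf_iff]
          exact ⟨Equiv.Perm.SameCycle.refl _ _, Equiv.Perm.mem_support.2 (hfa a)⟩
        obtain ⟨i, hi⟩ := hcyc.exists_pow_eq (Equiv.Perm.mem_support.1 ha')
          (Equiv.Perm.mem_support.1 hb)
        calc (c ^ n) b = (c ^ (n + i)) a := by
              rw [← hi, ← Equiv.Perm.mul_apply, ← pow_add]
          _ = (c ^ i) ((c ^ n) a) := by
              rw [add_comm, pow_add, Equiv.Perm.mul_apply]
          _ = b := by rw [hna, hi]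
      · rw [Equiv.Perm.notMem_support] at hb
        exact Equiv.Perm.pow_apply_eq_self_of_apply_eq_self hb n
  have h1 : orderOf c = orderOf x := by
    apply dvd_antisymm
    · exact orderOf_dvd_of_pow_eq_one ((hpow _).2 (pow_orderOf_eq_one x))
    · exact orderOf_dvd_of_pow_eq_one ((hpow _).1 (pow_orderOf_eq_one _))
  rw [← h1, hcyc.orderOf]

theorem stmt_1 (G : Type*) [Group G] [Fintype G] [DecidableEq G]
    (heven : Even (Nat.card G))
    (hcyc : ∀ S : Sylow 2 G, IsCyclic S ∧ Nontrivial S) :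
    Function.Surjective (fun g : G => Equiv.Perm.sign (Equiv.mulLeft g)) := by
  haveI : Fact (Nat.Prime 2) := ⟨Nat.prime_two⟩
  obtain ⟨S⟩ : Nonempty (Sylow 2 G) := inferInstance
  obtain ⟨hSc, hSn⟩ := hcyc S
  obtain ⟨g, hg⟩ := hSc.exists_generator
  set x : G := (g : G) with hxdef
  have htop : Subgroup.zpowers g = ⊤ := by
    ext s; simpa using hg s
  have horder : orderOf x = Nat.card S := by
    rw [hxdef, Subgroup.orderOf_coe, ← Nat.card_zpowers, htop, Subgroup.card_top]
  obtain ⟨k, hk⟩ := IsPGroup.iff_card.mp S.isPGroup'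
  have hk1 : 1 ≤ k := by
    by_contra h
    have h0 : k = 0 := by omega
    rw [h0, pow_zero] at hk
    exact absurd hk ((Finite.one_lt_card_iff_nontrivial).2 hSn).ne'
  have hxo : orderOf x = 2 ^ k := by rw [horder, hk]
  have hx1 : x ≠ 1 := by
    intro h
    rw [h, orderOf_one] at hxo
    have := Nat.one_lt_two_pow (n := k) (by omega)
    omega
  have hfa : ∀ b : G, Equiv.mulLeft x b ≠ b := by
    intro b h
    simp only [Equiv.coe_mulLeft] at h
    exact hx1 (mul_right_cancel (b := b) (by simpa using h))
  have hsupp : (Equiv.mulLeft x).support = Finset.univ := by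
    ext b; simp [Equiv.Perm.mem_support, hx1]
  have hct : ∀ n ∈ (Equiv.mulLeft x).cycleType, n = 2 ^ k := by
    intro n hn
    rw [Equiv.Perm.cycleType_def, Multiset.mem_map] at hn
    obtain ⟨c, hcmem, rfl⟩ := hn
    have hcyc' : c.IsCycle := (Equiv.Perm.mem_cycleFactorsFinset_iff.1 hcmem).1
    obtain ⟨a, ha⟩ := hcyc'.nonempty_support
    have hceq : c = (Equiv.mulLeft x).cycleOf a := Equiv.Perm.cycle_is_cycleOf ha hcmem
    simp only [Function.comp_apply, hceq]
    rw [card_support_cycleOf_mulLeft x hx1 a, hxo]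
  have hrepl : (Equiv.mulLeft x).cycleType =
      Multiset.replicate (Multiset.card (Equiv.mulLeft x).cycleType) (2 ^ k) :=
    Multiset.eq_replicate_card.2 hct
  have hsum : (Equiv.mulLeft x).cycleType.sum = Fintype.card G := by
    rw [Equiv.Perm.sum_cycleType, hsupp, Finset.card_univ]
  have hcardG : Fintype.card G = Multiset.card (Equiv.mulLeft x).cycleType * 2 ^ k := by
    rw [← hsum]; conv_lhs => rw [hrepl]
    rw [Multiset.sum_replicate, smul_eq_mul]
  have hindex : Nat.card S * S.toSubgroup.index = Nat.card G :=
    Subgroup.card_mul_index (S.toSubgroup)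
  have hnotdvd : ¬ 2 ∣ S.toSubgroup.index := Sylow.not_dvd_index S
  have hm : Multiset.card (Equiv.mulLeft x).cycleType = S.toSubgroup.index := by
    have h2k : 0 < (2 : ℕ) ^ k := by positivity
    apply Nat.eq_of_mul_eq_mul_right h2k
    rw [← hcardG, ← Nat.card_eq_fintype_card, ← hindex, hk, mul_comm]
  have hmodd : Odd (Multiset.card (Equiv.mulLeft x).cycleType) := by
    rw [hm, Nat.odd_iff]; omega
  have hGeven : Even (Fintype.card G) := by rwa [Nat.card_eq_fintype_card] at heven
  have hsign : Equiv.Perm.sign (Equiv.mulLeft x) = -1 := by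
    rw [Equiv.Perm.sign_of_cycleType, hsum]
    exact Odd.neg_one_pow (hGeven.add_odd hmodd)
  intro u
  rcases Int.units_eq_one_or u with rfl | rfl
  · exact ⟨1, by simp⟩
  · exact ⟨x, hsign⟩
end

section
/- Let G be a finite group with a generator g of a cyclic 2-Sylow subgroup of order 2^k with k ≥ 1. Then left multiplication by g, viewed as a permutation of G, is an odd permutation. -/
theorem stmt_2 (G : Type*) [Group G] [Fintype G] [DecidableEq G] (k : ℕ) (hk : 1 ≤ k)
    (S : Sylow 2 G) (hS : Nat.card S = 2 ^ k) (g : G) (hg : g ∈ S)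
    (hord : orderOf g = 2 ^ k) :
    Equiv.Perm.sign (Equiv.mulLeft g) = -1 := by
  have h2k : 1 < 2 ^ k := Nat.one_lt_two_pow_iff.mpr (by omega)
  have hg1 : g ≠ 1 := by
    intro h
    rw [h, orderOf_one] at hord
    omega
  set σ : Equiv.Perm G := Equiv.mulLeft g with hσdef
  have hpow : ∀ n : ℕ, σ ^ n = Equiv.mulLeft (g ^ n) := by
    intro n
    induction n with
    | zero => ext x; simp [hσdef]
    | succ n ih =>
      rw [pow_succ, pow_succ, ih]
      ext x
      simp [hσdef, mul_assoc]
  -- order of σ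
  have horder : orderOf σ ∣ 2 ^ k := by
    apply orderOf_dvd_of_pow_eq_one
    rw [hpow, ← hord, pow_orderOf_eq_one]
    ext x; simp
  -- every cycle length is 2 ^ k
  have hcyc : ∀ n ∈ σ.cycleType, n = 2 ^ k := by
    intro n hn
    have hdvd : n ∣ 2 ^ k := (Equiv.Perm.dvd_of_mem_cycleType hn).trans horder
    obtain ⟨j, hjk, rfl⟩ := (Nat.dvd_prime_pow Nat.prime_two).mp hdvd
    by_contra hne
    have hjlt : j < k := lt_of_le_of_ne hjk (fun h => hne (by rw [h]))
    have hdvd' : (2 : ℕ) ^ j ∣ 2 ^ (k - 1) := pow_dvd_pow 2 (by omega)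
    obtain ⟨c, τ, hστ, hd, hc, hcard⟩ := Equiv.Perm.mem_cycleType_iff.mp hn
    have hcs : c.support.Nonempty := by
      rw [← Finset.card_pos, hcard]
      exact Nat.pow_pos (by norm_num)
    obtain ⟨x, hx⟩ := hcs
    have hoc : orderOf c = 2 ^ j := by rw [hc.orderOf, hcard]
    have hc1 : c ^ (2 ^ (k - 1)) = 1 := by
      apply orderOf_dvd_iff_pow_eq_one.mp
      rw [hoc]; exact hdvd'
    have hτx : τ x = x := by
      rcases hd x with h | h
      · exact absurd h (Equiv.Perm.mem_support.mp hx)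
      · exact h
    have hτxp : (τ ^ (2 ^ (k - 1))) x = x := Function.IsFixedPt.perm_pow hτx _
    have hfix : (σ ^ (2 ^ (k - 1))) x = x := by
      rw [hστ, (hd.commute).mul_pow, Equiv.Perm.mul_apply, hτxp, hc1]
      rfl
    rw [hpow] at hfix
    simp only [Equiv.coe_mulLeft] at hfix
    have : g ^ (2 ^ (k - 1)) = 1 := by
      rwa [mul_eq_right] at hfix
    have : orderOf g ∣ 2 ^ (k - 1) := orderOf_dvd_iff_pow_eq_one.mpr this
    rw [hord] at this
    have := Nat.le_of_dvd (Nat.pow_pos (by norm_num)) this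
    have := Nat.pow_lt_pow_right (a := 2) (by norm_num) (show k - 1 < k by omega)
    omega
  -- support is everything
  have hsupp : σ.support = Finset.univ := by
    ext x
    simp only [Finset.mem_univ, iff_true, Equiv.Perm.mem_support, hσdef,
      Equiv.coe_mulLeft]
    intro h
    exact hg1 (by rwa [mul_eq_right] at h)
  have hrep : σ.cycleType = Multiset.replicate (Multiset.card σ.cycleType) (2 ^ k) :=
    Multiset.eq_replicate_card.mpr hcyc
  have hsum : σ.cycleType.sum = Fintype.card G := by
    rw [Equiv.Perm.sum_cycleType, hsupp, Finset.card_univ]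
  -- count index
  have hidx : Nat.card S * (S : Subgroup G).index = Nat.card G :=
    Subgroup.card_mul_index _
  have hodd : ¬ 2 ∣ (S : Subgroup G).index := S.not_dvd_index
  have hcardG : Fintype.card G = 2 ^ k * (S : Subgroup G).index := by
    rw [← hS, hidx, Nat.card_eq_fintype_card]
  have hcount : Multiset.card σ.cycleType = (S : Subgroup G).index := by
    have : Multiset.card σ.cycleType * 2 ^ k = 2 ^ k * (S : Subgroup G).index := by
      rw [← hcardG, ← hsum, hrep, Multiset.sum_replicate, smul_eq_mul,
        Multiset.card_replicate]
    have h2 : 0 < 2 ^ k := by omega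
    rw [mul_comm] at this
    exact Nat.eq_of_mul_eq_mul_left h2 this
  have hoddexp : Odd (σ.cycleType.sum + Multiset.card σ.cycleType) := by
    rw [hsum, hcardG, hcount]
    refine Even.add_odd ⟨2 ^ (k - 1) * (S : Subgroup G).index, ?_⟩ (Nat.odd_iff.mpr ?_)
    · have : 2 ^ k = 2 ^ (k - 1) * 2 := by
        rw [← pow_succ]; congr 1; omega
      rw [this]; ring
    · omega
  rw [Equiv.Perm.sign_of_cycleType]
  exact Odd.neg_one_pow hoddexp
end

section
/- Let 1 → Z/2 → 𝒢 → G → 1 be a central extension of finite groups, with G of order m·2^k, m odd, and with a normal subgroup N of G of order m. Then the extension splits if and only if its restriction to a 2-Sylow subgroup S of G (i.e., the extension 1 → Z/2 → π⁻¹(S) → S → 1) splits. -/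
theorem stmt_6 (𝒢 G : Type*) [Group 𝒢] [Group G] [Fintype 𝒢] [Fintype G]
    (π : 𝒢 →* G) (hsurj : Function.Surjective π)
    (hker : Nat.card π.ker = 2) (hcentral : π.ker ≤ Subgroup.center 𝒢)
    (m k : ℕ) (hm : Odd m) (hcard : Nat.card G = m * 2 ^ k)
    (N : Subgroup G) (hN : N.Normal) (hNm : Nat.card N = m)
    (S : Sylow 2 G) :
    (∃ s : G →* 𝒢, ∀ g : G, π (s g) = g) ↔
      (∃ t : (S : Subgroup G) →* 𝒢, ∀ x : (S : Subgroup G), π (t x) = (x : G)) := by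
  constructor
  · rintro ⟨s, hs⟩
    exact ⟨s.comp (S : Subgroup G).subtype, fun x => hs x⟩
  · rintro ⟨t, ht⟩
    haveI : Fact (Nat.Prime 2) := ⟨Nat.prime_two⟩
    haveI hcyc : IsCyclic π.ker := isCyclic_of_prime_card hker
    letI : CommGroup π.ker := IsCyclic.commGroup
    set H : Subgroup 𝒢 := Subgroup.comap π (S : Subgroup G) with hH
    -- the map h ↦ h * (t (π h))⁻¹ from H to ker π
    have hmem : ∀ h : H, (h : 𝒢) * (t ⟨π h, h.2⟩)⁻¹ ∈ π.ker := by
      intro h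
      rw [MonoidHom.mem_ker, map_mul, map_inv, ht ⟨π h, h.2⟩]
      exact mul_inv_cancel _
    let ψ : H →* π.ker :=
      { toFun := fun h => ⟨(h : 𝒢) * (t ⟨π h, h.2⟩)⁻¹, hmem h⟩
        map_one' := by
          ext
          have h1 : (⟨π ((1 : H) : 𝒢), (1 : H).2⟩ : (S : Subgroup G)) = 1 := by
            ext; simp
          show ((1 : H) : 𝒢) * (t ⟨π ((1 : H) : 𝒢), (1 : H).2⟩)⁻¹ = 1
          rw [h1, map_one, inv_one, mul_one]; simp
        map_mul' := by
          intro a b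
          ext
          have hab : (⟨π ((a * b : H) : 𝒢), (a * b).2⟩ : (S : Subgroup G)) =
              ⟨π a, a.2⟩ * ⟨π b, b.2⟩ := by
            ext; simp
          have hbc : ∀ x : 𝒢, ((b : 𝒢) * (t ⟨π b, b.2⟩)⁻¹) * x =
              x * ((b : 𝒢) * (t ⟨π b, b.2⟩)⁻¹) := by
            intro x
            exact (Subgroup.mem_center_iff.mp (hcentral (hmem b)) x).symm
          show ((a * b : H) : 𝒢) * (t ⟨π ((a * b : H) : 𝒢), (a * b).2⟩)⁻¹ =
            ((a : 𝒢) * (t ⟨π a, a.2⟩)⁻¹) * ((b : 𝒢) * (t ⟨π b, b.2⟩)⁻¹)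
          rw [hab, map_mul, mul_inv_rev]
          calc (a : 𝒢) * (b : 𝒢) * ((t ⟨π b, b.2⟩)⁻¹ * (t ⟨π a, a.2⟩)⁻¹)
              = (a : 𝒢) * ((b : 𝒢) * (t ⟨π b, b.2⟩)⁻¹) * (t ⟨π a, a.2⟩)⁻¹ := by
                group
            _ = (a : 𝒢) * (t ⟨π a, a.2⟩)⁻¹ * ((b : 𝒢) * (t ⟨π b, b.2⟩)⁻¹) := by
                rw [mul_assoc, hbc ((t ⟨π ↑a, a.2⟩)⁻¹), ← mul_assoc] }
    -- the transfer homomorphism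
    haveI : H.FiniteIndex := inferInstance
    let V : 𝒢 →* π.ker := MonoidHom.transfer ψ
    -- the nontrivial element z of ker π
    obtain ⟨z, hz1, hzu⟩ := (Nat.card_eq_two_iff' (1 : π.ker)).mp hker
    have hz2 : z ^ 2 = 1 := by rw [← hker]; exact pow_card_eq_one'
    -- H has odd index
    have hodd : Odd H.index := by
      rw [hH, Subgroup.index_comap_of_surjective _ hsurj]
      exact (Nat.odd_iff.mpr (Nat.two_dvd_ne_zero.mp S.not_dvd_index))
    -- key computation: V z = z
    have hVz : V (z : 𝒢) = z := by
      have hzc : (z : 𝒢) ∈ Subgroup.center 𝒢 := hcentral z.2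
      have key : ∀ (n : ℕ) (g₀ : 𝒢), g₀⁻¹ * (z : 𝒢) ^ n * g₀ ∈ H →
          g₀⁻¹ * (z : 𝒢) ^ n * g₀ = (z : 𝒢) ^ n := by
        intro n g₀ _
        have hc : (z : 𝒢) ^ n ∈ Subgroup.center 𝒢 := pow_mem hzc n
        rw [Subgroup.mem_center_iff.mp hc g₀⁻¹]; group
      rw [show V (z : 𝒢) = MonoidHom.transfer ψ (z : 𝒢) from rfl,
        MonoidHom.transfer_eq_pow ψ (z : 𝒢) key]
      have hπzn : π ((z : 𝒢) ^ H.index) = 1 := by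
        have : π (z : 𝒢) = 1 := z.2
        rw [map_pow, this, one_pow]
      have hmemS : π ((z : 𝒢) ^ H.index) ∈ (S : Subgroup G) := by
        rw [hπzn]; exact (S : Subgroup G).one_mem
      ext
      show (z : 𝒢) ^ H.index * (t ⟨π ((z : 𝒢) ^ H.index), hmemS⟩)⁻¹ = (z : 𝒢)
      have h1 : (⟨π ((z : 𝒢) ^ H.index), hmemS⟩ : (S : Subgroup G)) = 1 := by
        ext; simp [hπzn]
      rw [h1, map_one, inv_one, mul_one]
      obtain ⟨j, hj⟩ := hodd
      have : z ^ H.index = z := by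
        rw [hj, pow_add, pow_mul, hz2, one_pow, one_mul, pow_one]
      calc (z : 𝒢) ^ H.index = ((z ^ H.index : π.ker) : 𝒢) := by
            rw [SubgroupClass.coe_pow]
        _ = (z : 𝒢) := by rw [this]
    -- ker V maps bijectively onto G
    let φ : V.ker →* G := π.comp V.ker.subtype
    have hinj : Function.Injective φ := by
      rw [injective_iff_map_eq_one]
      intro a ha
      have hak : (a : 𝒢) ∈ π.ker := ha
      ext
      by_contra hne
      have : (⟨(a : 𝒢), hak⟩ : π.ker) = z := hzu _ (by
        intro h1
        exact hne (by simpa using congrArg (Subtype.val) h1))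
      have : V (a : 𝒢) = z := by
        rw [← hVz]; congr 1
        exact congrArg Subtype.val this
      have h0 : V (a : 𝒢) = 1 := a.2
      exact hz1 (by rw [← this, h0])
    have hsurj' : Function.Surjective φ := by
      intro g
      obtain ⟨x, hx⟩ := hsurj g
      rcases eq_or_ne (V x) 1 with h1 | h1
      · exact ⟨⟨x, h1⟩, hx⟩
      · have hVxz : V x = z := hzu _ h1
        refine ⟨⟨x * (z : 𝒢)⁻¹, ?_⟩, ?_⟩
        · show V (x * (z : 𝒢)⁻¹) = 1
          rw [map_mul, map_inv, hVxz, hVz, mul_inv_cancel]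
        · show π (x * (z : 𝒢)⁻¹) = g
          have : π (z : 𝒢) = 1 := z.2
          rw [map_mul, map_inv, this, inv_one, mul_one, hx]
    let e : V.ker ≃* G := MulEquiv.ofBijective φ ⟨hinj, hsurj'⟩
    refine ⟨V.ker.subtype.comp e.symm.toMonoidHom, fun g => ?_⟩
    show φ (e.symm g) = g
    exact e.apply_symm_apply g
end

section
/- Let π: 𝒢 → Q_{2^{k+1}} be a surjective group homomorphism with central kernel {±1} of order 2, and let x̃, ỹ ∈ 𝒢 be preimages of the standard generators x, y. If x̃^{2^{k-1}} = ±ỹ² and ỹx̃ỹ⁻¹ = ±x̃⁻¹ hold, then x̃^{2^k} = 1 (i.e., x̃ has the same order 2^k as x, not twice the order). -/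
theorem stmt_9 (𝒢 : Type*) [Group 𝒢] (k : ℕ) (hk : 2 ≤ k)
    (π : 𝒢 →* QuaternionGroup (2 ^ (k - 1))) (hsurj : Function.Surjective π)
    (ε : 𝒢) (hε : ε ∈ Subgroup.center 𝒢) (hε2 : ε ^ 2 = 1) (hε1 : ε ≠ 1)
    (hker : π.ker = Subgroup.closure {ε})
    (x' y' : 𝒢) (hx : π x' = QuaternionGroup.a 1) (hy : π y' = QuaternionGroup.xa 0)
    (h1 : x' ^ (2 ^ (k - 1)) = y' ^ 2 ∨ x' ^ (2 ^ (k - 1)) = ε * y' ^ 2)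
    (h2 : y' * x' * y'⁻¹ = x'⁻¹ ∨ y' * x' * y'⁻¹ = ε * x'⁻¹) :
    x' ^ (2 ^ k) = 1 := by
  have hc : ∀ g : 𝒢, g * ε = ε * g := fun g => (Subgroup.mem_center_iff.mp hε g)
  set n := 2 ^ (k - 1) with hn
  have hεn : ε ^ n = 1 := by
    have h' : n = 2 * 2 ^ (k - 2) := by
      rw [hn, ← pow_succ']
      congr 1
      omega
    rw [h', pow_mul, hε2, one_pow]
  have conj1 : y' * x' ^ n * y'⁻¹ = (x' ^ n)⁻¹ := by
    have hcp : (y' * x' * y'⁻¹) ^ n = y' * x' ^ n * y'⁻¹ := conj_pow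
    rcases h2 with h2 | h2
    · rw [h2, inv_pow] at hcp
      rw [← hcp]
    · rw [h2] at hcp
      have hcomm : Commute ε x'⁻¹ := (hc x'⁻¹).symm
      rw [hcomm.mul_pow, hεn, one_mul, inv_pow] at hcp
      rw [← hcp]
  have conj2 : y' * x' ^ n * y'⁻¹ = x' ^ n := by
    rcases h1 with h1 | h1
    · rw [h1]
      group
    · rw [h1, ← mul_assoc, hc y', mul_assoc ε, mul_assoc ε]
      congr 1
      group
  have hkey : x' ^ n = (x' ^ n)⁻¹ := by rw [← conj1, conj2]
  have hsq : (x' ^ n) ^ 2 = 1 := by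
    rw [sq]; exact mul_eq_one_iff_eq_inv.mpr hkey
  rw [show 2 ^ k = n * 2 by rw [hn, ← pow_succ]; congr 1; omega, pow_mul, hsq]
end

section
/- Let 𝒢 be a finite group that is a semidirect product 𝒩 ⋊ 𝒮 where 𝒩 has odd order and 𝒮 is a cyclic 2-group. Then for any g ∈ 𝒮 and n ∈ 𝒩, if ngn⁻¹ ∈ 𝒮 then ngn⁻¹ = g. In particular two distinct elements of 𝒮 are never conjugate by an element of 𝒩. -/
theorem stmt_10 (𝒢 : Type*) [Group 𝒢] [Fintype 𝒢]
    (𝒩 𝒮 : Subgroup 𝒢) (h𝒩 : 𝒩.Normal) (hodd : Odd (Nat.card 𝒩))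
    (hcyc : IsCyclic 𝒮) (k : ℕ) (h𝒮 : Nat.card 𝒮 = 2 ^ k)
    (hdisj : 𝒩 ⊓ 𝒮 = ⊥) (hprod : ∀ g : 𝒢, ∃ n ∈ 𝒩, ∃ s ∈ 𝒮, g = n * s) :
    ∀ g ∈ 𝒮, ∀ n ∈ 𝒩, n * g * n⁻¹ ∈ 𝒮 → n * g * n⁻¹ = g := by
  intro g hg n hn hc
  have h1 : n * g * n⁻¹ * g⁻¹ ∈ 𝒩 := by
    have := 𝒩.mul_mem hn (h𝒩.conj_mem n⁻¹ (𝒩.inv_mem hn) g)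
    simpa [mul_assoc] using this
  have h2 : n * g * n⁻¹ * g⁻¹ ∈ 𝒮 := 𝒮.mul_mem hc (𝒮.inv_mem hg)
  have h3 : n * g * n⁻¹ * g⁻¹ = 1 := by
    have : n * g * n⁻¹ * g⁻¹ ∈ 𝒩 ⊓ 𝒮 := ⟨h1, h2⟩
    simpa [hdisj] using this
  exact mul_inv_eq_one.mp h3
end

section
/- Let 𝒢 be a finite group with a normal subgroup 𝒩 of odd order and a cyclic 2-Sylow subgroup 𝒮 with 𝒢 = 𝒩 ⋊ 𝒮 and |𝒮| divisible by 4. Then there exists g ∈ 𝒮 with g ≠ g⁻¹ such that g is not conjugate in 𝒢 to any element of 𝒮 other than g itself; in particular g is conjugate neither to −g nor to g⁻¹ for any central involution −1 ∈ 𝒮 \ {g}. -/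
theorem stmt_11 (𝒢 : Type*) [Group 𝒢] [Fintype 𝒢]
    (𝒩 𝒮 : Subgroup 𝒢) (h𝒩 : 𝒩.Normal) (hodd : Odd (Nat.card 𝒩))
    (hcyc : IsCyclic 𝒮) (k : ℕ) (hk : 2 ≤ k) (h𝒮 : Nat.card 𝒮 = 2 ^ k)
    (hdisj : 𝒩 ⊓ 𝒮 = ⊥) (hprod : ∀ g : 𝒢, ∃ n ∈ 𝒩, ∃ s ∈ 𝒮, g = n * s) :
    ∃ g ∈ 𝒮, g ≠ g⁻¹ ∧ ∀ h : 𝒢, ∀ s ∈ 𝒮, h * g * h⁻¹ = s → s = g := by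
  obtain ⟨x, hx⟩ := hcyc.exists_generator
  refine ⟨(x : 𝒢), x.2, ?_, ?_⟩
  · intro hg
    have hxx : (x : 𝒮) = x⁻¹ := Subtype.ext hg
    have h2 : x ^ 2 = 1 := by
      rw [pow_two]
      nth_rewrite 2 [hxx]
      exact mul_inv_cancel x
    have hdvd : orderOf x ∣ 2 := orderOf_dvd_of_pow_eq_one h2
    have hord : orderOf x = 2 ^ k := by
      have := orderOf_eq_card_of_forall_mem_zpowers hx
      rwa [h𝒮] at this
    rw [hord] at hdvd
    have h4 : (4 : ℕ) ∣ 2 ^ k := by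
      have : (2:ℕ) ^ 2 ∣ 2 ^ k := pow_dvd_pow 2 hk
      simpa using this
    have : (4 : ℕ) ∣ 2 := h4.trans hdvd
    omega
  · intro h s hs heq
    obtain ⟨n, hn, t, ht, hh⟩ := hprod h
    have hcomm : t * (x : 𝒢) * t⁻¹ = (x : 𝒢) := by
      obtain ⟨m, hm⟩ := hx ⟨t, ht⟩
      have htx : t = (x : 𝒢) ^ m := by
        have := congrArg (Subtype.val) hm
        simpa using this.symm
      rw [htx]
      group
    have hconj : h * (x : 𝒢) * h⁻¹ = n * (x : 𝒢) * n⁻¹ := by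
      rw [hh, mul_inv_rev]
      calc n * t * (x : 𝒢) * (t⁻¹ * n⁻¹) = n * (t * (x : 𝒢) * t⁻¹) * n⁻¹ := by group
        _ = n * (x : 𝒢) * n⁻¹ := by rw [hcomm]
    rw [hconj] at heq
    have hmemN : s * (x : 𝒢)⁻¹ ∈ 𝒩 := by
      have h1 : (x : 𝒢) * n⁻¹ * (x : 𝒢)⁻¹ ∈ 𝒩 := h𝒩.conj_mem _ (inv_mem hn) _
      have : s * (x : 𝒢)⁻¹ = n * ((x : 𝒢) * n⁻¹ * (x : 𝒢)⁻¹) := by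
        rw [← heq]; group
      rw [this]
      exact mul_mem hn h1
    have hmemS : s * (x : 𝒢)⁻¹ ∈ 𝒮 := mul_mem hs (inv_mem x.2)
    have : s * (x : 𝒢)⁻¹ ∈ (⊥ : Subgroup 𝒢) := hdisj ▸ ⟨hmemN, hmemS⟩
    exact mul_inv_eq_one.mp (Subgroup.mem_bot.mp this)
end

section
/- There exists a central extension 1 → Z/2 → 𝒢 → Q₈ → 1 of the quaternion group Q₈ that does not split, but whose restriction to every cyclic subgroup of Q₈ splits. (For example, 𝒢 a semidirect product of Z/4 by Z/4.) -/
set_option maxHeartbeats 2000000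

structure GG where
  x : ZMod 4
  y : ZMod 4
  deriving DecidableEq, Fintype

namespace GG

instance : Mul GG := ⟨fun g h => ⟨g.x + (if g.y.val % 2 = 0 then h.x else -h.x), g.y + h.y⟩⟩
instance : One GG := ⟨⟨0, 0⟩⟩
instance : Inv GG := ⟨fun g => ⟨if g.y.val % 2 = 0 then -g.x else g.x, -g.y⟩⟩

instance : Group GG where
  mul_assoc := by decide
  one_mul := by decide
  mul_one := by decide
  inv_mul_cancel := by decide

def pi : GG →* QuaternionGroup 2 where
  toFun g :=
    if g.y = 0 then .a g.x
    else if g.y = 1 then .xa (-g.x)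
    else if g.y = 2 then .a (g.x + 2)
    else .xa (2 - g.x)
  map_one' := by decide
  map_mul' := by decide

lemma lift_ex (q : QuaternionGroup 2) : ∃ g : GG, pi g = q ∧ g ^ orderOf q = 1 := by
  rcases q with i | i
  · rw [QuaternionGroup.orderOf_a]
    revert i; decide
  · rw [QuaternionGroup.orderOf_xa]
    revert i; decide

end GG

theorem stmt_16 :
    ∃ (𝒢 : Type) (_ : Group 𝒢) (_ : Fintype 𝒢) (π : 𝒢 →* QuaternionGroup 2),
      Function.Surjective π ∧ Nat.card (MonoidHom.ker π) = 2 ∧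
      MonoidHom.ker π ≤ Subgroup.center 𝒢 ∧
      ¬(∃ s : QuaternionGroup 2 →* 𝒢, ∀ g, π (s g) = g) ∧
      (∀ H : Subgroup (QuaternionGroup 2), IsCyclic H →
        ∃ t : H →* 𝒢, ∀ x : H, π (t x) = (x : QuaternionGroup 2)) ∧
      (∃ a b : 𝒢, orderOf a = 4 ∧ orderOf b = 4 ∧ b * a * b⁻¹ = a⁻¹ ∧
        Nat.card 𝒢 = 16 ∧ Subgroup.closure {a, b} = ⊤) := by
  refine ⟨GG, inferInstance, inferInstance, GG.pi, ?_, ?_, ?_, ?_, ?_, ?_⟩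
  · -- surjective
    intro q
    obtain ⟨g, hg, -⟩ := GG.lift_ex q
    exact ⟨g, hg⟩
  · -- kernel has 2 elements
    have hker : MonoidHom.ker GG.pi = Subgroup.zpowers (⟨2, 2⟩ : GG) := by
      apply le_antisymm
      · intro g hg
        have key : ∀ g : GG, GG.pi g = 1 → g = 1 ∨ g = ⟨2, 2⟩ := by decide
        rcases key g (MonoidHom.mem_ker.mp hg) with rfl | rfl
        · exact one_mem _
        · exact Subgroup.mem_zpowers _
      · rw [Subgroup.zpowers_le]
        exact MonoidHom.mem_ker.mpr (by decide)
    rw [hker, Nat.card_zpowers]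
    exact orderOf_eq_prime (by decide) (by decide)
  · -- kernel central
    intro g hg
    rw [Subgroup.mem_center_iff]
    have key : ∀ g : GG, GG.pi g = 1 → ∀ b : GG, b * g = g * b := by decide
    exact key g (MonoidHom.mem_ker.mp hg)
  · -- no splitting
    rintro ⟨s, hs⟩
    have key : ∀ u v : GG, GG.pi u = .a 1 → GG.pi v = .xa 0 → u * u ≠ v * v := by decide
    apply key (s (.a 1)) (s (.xa 0)) (hs _) (hs _)
    rw [← map_mul, ← map_mul]
    congr 1
  · -- restrictions to cyclic subgroups split
    intro H hH
    obtain ⟨h, hgen⟩ := hH.exists_generator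
    obtain ⟨g, hg1, hg2⟩ := GG.lift_ex (h : QuaternionGroup 2)
    have horder : orderOf (h : QuaternionGroup 2) = orderOf h :=
      orderOf_injective H.subtype H.subtype_injective h
    have hdvd : orderOf g ∣ orderOf h := by
      rw [← horder]
      exact orderOf_dvd_of_pow_eq_one hg2
    refine ⟨monoidHomOfForallMemZpowers hgen hdvd, fun x => ?_⟩
    obtain ⟨k, hk⟩ := Subgroup.mem_zpowers_iff.mp (hgen x)
    rw [← hk, map_zpow, monoidHomOfForallMemZpowers_apply_gen, map_zpow, hg1]
    simp
  · -- generators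
    refine ⟨⟨1, 0⟩, ⟨0, 1⟩, ?_, ?_, by decide, ?_, ?_⟩
    · rw [orderOf_eq_iff (by norm_num)]; decide
    · rw [orderOf_eq_iff (by norm_num)]; decide
    · rw [Nat.card_eq_fintype_card]; decide
    · rw [eq_top_iff]
      intro g _
      have decomp : ∀ g : GG, g = (⟨1, 0⟩ : GG) ^ g.x.val * (⟨0, 1⟩ : GG) ^ g.y.val := by decide
      rw [decomp g]
      exact mul_mem (pow_mem (Subgroup.subset_closure (by simp)) _)
        (pow_mem (Subgroup.subset_closure (by simp)) _)
end
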